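/- On ℝ^6, let F_1 = I_1 + I_2 + 2I_3, F_2 = C_0 + 2C_2, and F_3 = 2C_0² + I_1 M_3². Then {F_1, F_2} = {F_1, F_3} = {F_2, F_3} = 0, and the three functions (F_1, F_2, F_3) are functionally independent; hence (F_1, F_2, F_3) is an integrable set, with deg F_2 = 3 and deg F_3 = 6, for the resonance l = (1,1,2). -/

import Mathlib

noncomputable section

open Complex

/-- Phase space `ℝ^{2n}`: a point is a pair `(x, p)` of vectors in `ℝ^n`. -/
abbrev Phase (n : ℕ) : Type := (Fin n → ℝ) × (Fin n → ℝ)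

/-- Poisson bracket of complex-valued functions on phase space:
`{f,g} = ∑ j (∂f/∂p_j ∂g/∂x_j − ∂f/∂x_j ∂g/∂p_j)`. -/
def pb {n : ℕ} (f g : Phase n → ℂ) : Phase n → ℂ := fun w =>
  ∑ j : Fin n,
    (fderiv ℝ f w ((0 : Fin n → ℝ), Pi.single j (1 : ℝ)) *
        fderiv ℝ g w (Pi.single j (1 : ℝ), (0 : Fin n → ℝ)) -
      fderiv ℝ f w (Pi.single j (1 : ℝ), (0 : Fin n → ℝ)) *
        fderiv ℝ g w ((0 : Fin n → ℝ), Pi.single j (1 : ℝ)))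

/-- Poisson bracket of real-valued functions on phase space. -/
def pbR {n : ℕ} (f g : Phase n → ℝ) : Phase n → ℝ := fun w =>
  ∑ j : Fin n,
    (fderiv ℝ f w ((0 : Fin n → ℝ), Pi.single j (1 : ℝ)) *
        fderiv ℝ g w (Pi.single j (1 : ℝ), (0 : Fin n → ℝ)) -
      fderiv ℝ f w (Pi.single j (1 : ℝ), (0 : Fin n → ℝ)) *
        fderiv ℝ g w ((0 : Fin n → ℝ), Pi.single j (1 : ℝ)))

/-- `z_j = (x_j + i p_j)/√2`. -/
def zf {n : ℕ} (j : Fin n) (w : Phase n) : ℂ :=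
  ((w.1 j : ℂ) + Complex.I * (w.2 j : ℂ)) / ((Real.sqrt 2 : ℝ) : ℂ)

/-- `z̄_j = (x_j − i p_j)/√2`. -/
def zbf {n : ℕ} (j : Fin n) (w : Phase n) : ℂ :=
  ((w.1 j : ℂ) - Complex.I * (w.2 j : ℂ)) / ((Real.sqrt 2 : ℝ) : ℂ)

/-- `I_j = z_j z̄_j` (complex-valued; its values are real). -/
def Iact {n : ℕ} (j : Fin n) (w : Phase n) : ℂ := zf j w * zbf j w

/-- `I_j = (x_j² + p_j²)/2` (real-valued). -/
def IR {n : ℕ} (j : Fin n) (w : Phase n) : ℝ := (w.1 j ^ 2 + w.2 j ^ 2) / 2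

/-- A family of real functions on phase space is functionally independent if their
differentials are linearly independent at every point of some dense open set. -/
def FunctionallyIndependent {n : ℕ} {ι : Type*} (f : ι → Phase n → ℝ) : Prop :=
  ∃ U : Set (Phase n), IsOpen U ∧ Dense U ∧
    ∀ w ∈ U, LinearIndependent ℝ (fun i => fderiv ℝ (f i) w)

/-- The monomial `P_{a,b} = ∏_j z_j^{a_j} z̄_j^{b_j}`. -/
def Pab {n : ℕ} (a b : Fin n → ℕ) (w : Phase n) : ℂ :=
  ∏ j : Fin n, zf j w ^ a j * zbf j w ^ b j

/-- `R_m = ∏_j ζ_j^{m_j}`, with `ζ_j^{m_j} = z_j^{m_j}` for `m_j ≥ 0` and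
`ζ_j^{m_j} = z̄_j^{−m_j}` for `m_j < 0`. -/
def Rm {n : ℕ} (m : Fin n → ℤ) (w : Phase n) : ℂ :=
  ∏ j : Fin n, if 0 ≤ m j then zf j w ^ (m j).toNat else zbf j w ^ (-(m j)).toNat

/-- `w_i = z_i` if `ε_i = 1`, `w_i = z̄_i` if `ε_i = −1`. -/
def wfun {n : ℕ} (ε : Fin n → ℤ) (i : Fin n) (w : Phase n) : ℂ :=
  if ε i = 1 then zf i w else zbf i w

/-- `w̄_i`, the complex conjugate of `w_i`. -/
def wbfun {n : ℕ} (ε : Fin n → ℤ) (i : Fin n) (w : Phase n) : ℂ :=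
  if ε i = 1 then zbf i w else zf i w

/-- `P_{ij} = i(w_i w̄_j − w_j w̄_i)` (complex-valued; its values are real). -/
def Pf {n : ℕ} (ε : Fin n → ℤ) (i j : Fin n) (w : Phase n) : ℂ :=
  Complex.I * (wfun ε i w * wbfun ε j w - wfun ε j w * wbfun ε i w)

/-- `P_{ij}` as a real-valued function. -/
def PfR {n : ℕ} (ε : Fin n → ℤ) (i j : Fin n) (w : Phase n) : ℝ :=
  (Pf ε i j w).re


/-- `C₀ = Im(z̄₁² z₃)`. -/
def C0 (w : Phase 3) : ℝ := (zbf 0 w ^ 2 * zf 2 w).im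

/-- `C₂ = Im(z̄₂² z₃)`. -/
def C2 (w : Phase 3) : ℝ := (zbf 1 w ^ 2 * zf 2 w).im

/-- `M₃ = 2 Im(z̄₁ z₂)`. -/
def M3 (w : Phase 3) : ℝ := 2 * (zbf 0 w * zf 1 w).im

namespace St18

open MvPolynomial

/-! ### Derivative of multivariate polynomial evaluation -/

section general
variable {σ : Type*} [Fintype σ] [DecidableEq σ]

/-- Derivative CLM of the evaluation of an MvPolynomial. -/
def evalDeriv (Q : MvPolynomial σ ℝ) (v : σ → ℝ) : (σ → ℝ) →L[ℝ] ℝ :=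
  ∑ s : σ, eval v (pderiv s Q) • (ContinuousLinearMap.proj s : (σ → ℝ) →L[ℝ] ℝ)

omit [DecidableEq σ] in
lemma evalDeriv_apply (Q : MvPolynomial σ ℝ) (v u : σ → ℝ) :
    evalDeriv Q v u = ∑ s : σ, eval v (pderiv s Q) * u s := by
  simp [evalDeriv, ContinuousLinearMap.sum_apply]

lemma hasFDerivAt_eval (Q : MvPolynomial σ ℝ) (v : σ → ℝ) :
    HasFDerivAt (fun v : σ → ℝ => eval v Q) (evalDeriv Q v) v := by
  induction Q using MvPolynomial.induction_on with
  | C c =>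
      have : evalDeriv (C c : MvPolynomial σ ℝ) v = 0 := by
        simp [evalDeriv, pderiv_C]
      simpa [this] using hasFDerivAt_const (c : ℝ) v
  | add p q hp hq =>
      have : evalDeriv (p + q) v = evalDeriv p v + evalDeriv q v := by
        simp [evalDeriv, Finset.sum_add_distrib, add_smul]
      have hf : (fun v : σ → ℝ => eval v (p + q)) = (fun v => eval v p) + (fun v => eval v q) := by
        funext x; simp
      rw [this, hf]; exact hp.add hq
  | mul_X p i hp =>
      have h2 : HasFDerivAt (fun v : σ → ℝ => v i)
          (ContinuousLinearMap.proj i : (σ → ℝ) →L[ℝ] ℝ) v :=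
        (hasFDerivAt_apply i v)
      have := hp.mul h2
      have heq : evalDeriv (p * X i) v =
          eval v p • (ContinuousLinearMap.proj i : (σ → ℝ) →L[ℝ] ℝ) + v i • evalDeriv p v := by
        ext u
        simp only [evalDeriv, pderiv_mul, pderiv_X, ContinuousLinearMap.sum_apply,
          ContinuousLinearMap.add_apply, ContinuousLinearMap.smul_apply,
          ContinuousLinearMap.proj_apply, map_add, map_mul, eval_X, smul_eq_mul,
          Finset.sum_apply, Pi.single_apply, apply_ite (eval v), map_one, map_zero, add_mul]
        rw [Finset.sum_add_distrib]
        have h1 : ∑ x : σ, (eval v ((pderiv x) p) * v i) * u x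
            = v i * ∑ x : σ, eval v ((pderiv x) p) * u x := by
          rw [Finset.mul_sum]; apply Finset.sum_congr rfl; intros; ring
        have h2' : ∑ x : σ, (eval v p * (if i = x then (1:ℝ) else 0)) * u x = eval v p * u i := by
          simp [ite_mul, mul_ite]
        rw [h1, h2']; ring
      have hf : (fun v : σ → ℝ => eval v (p * X i)) = (fun v => eval v p) * (fun v : σ → ℝ => v i) := by
        funext x; simp
      rw [heq, hf]
      exact this

end general

/-! ### Phase-space specialization -/

/-- The linear coordinate-collecting map. -/
def vmapL : Phase 3 →L[ℝ] (Fin 3 ⊕ Fin 3 → ℝ) :=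
  ContinuousLinearMap.pi (Sum.elim
    (fun j => (ContinuousLinearMap.proj j).comp (ContinuousLinearMap.fst ℝ (Fin 3 → ℝ) (Fin 3 → ℝ)))
    (fun j => (ContinuousLinearMap.proj j).comp (ContinuousLinearMap.snd ℝ (Fin 3 → ℝ) (Fin 3 → ℝ))))

lemma vmapL_apply (w : Phase 3) : vmapL w = Sum.elim w.1 w.2 := by
  funext s
  cases s <;> rfl

/-- Evaluation of a polynomial on phase space. -/
def Ef (Q : MvPolynomial (Fin 3 ⊕ Fin 3) ℝ) : Phase 3 → ℝ :=
  fun w => eval (Sum.elim w.1 w.2) Q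

lemma hasFDerivAt_Ef (Q : MvPolynomial (Fin 3 ⊕ Fin 3) ℝ) (w : Phase 3) :
    HasFDerivAt (Ef Q) ((evalDeriv Q (Sum.elim w.1 w.2)).comp vmapL) w := by
  have h := (hasFDerivAt_eval Q (vmapL w)).comp w vmapL.hasFDerivAt
  have : Ef Q = (fun v : Fin 3 ⊕ Fin 3 → ℝ => eval v Q) ∘ vmapL := by
    funext w; simp [Ef, vmapL_apply]
  rw [this]
  rw [vmapL_apply] at h
  exact h

lemma fderiv_Ef (Q : MvPolynomial (Fin 3 ⊕ Fin 3) ℝ) (w : Phase 3) (d : Phase 3) :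
    fderiv ℝ (Ef Q) w d = ∑ s : Fin 3 ⊕ Fin 3,
      eval (Sum.elim w.1 w.2) (pderiv s Q) * Sum.elim d.1 d.2 s := by
  rw [(hasFDerivAt_Ef Q w).fderiv]
  simp [evalDeriv_apply, vmapL_apply]

lemma fderiv_Ef_x (Q : MvPolynomial (Fin 3 ⊕ Fin 3) ℝ) (w : Phase 3) (j : Fin 3) :
    fderiv ℝ (Ef Q) w (Pi.single j 1, (0 : Fin 3 → ℝ)) =
      eval (Sum.elim w.1 w.2) (pderiv (Sum.inl j) Q) := by
  rw [fderiv_Ef, Fintype.sum_sum_type]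
  simp [Pi.single_apply, mul_ite, Finset.sum_ite_eq]

lemma fderiv_Ef_p (Q : MvPolynomial (Fin 3 ⊕ Fin 3) ℝ) (w : Phase 3) (j : Fin 3) :
    fderiv ℝ (Ef Q) w ((0 : Fin 3 → ℝ), Pi.single j 1) =
      eval (Sum.elim w.1 w.2) (pderiv (Sum.inr j) Q) := by
  rw [fderiv_Ef, Fintype.sum_sum_type]
  simp [Pi.single_apply, mul_ite, Finset.sum_ite_eq]

/-- Poisson bracket of two polynomial observables is the evaluation of a polynomial. -/
lemma pbR_Ef (Q R : MvPolynomial (Fin 3 ⊕ Fin 3) ℝ) (w : Phase 3) :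
    pbR (Ef Q) (Ef R) w = eval (Sum.elim w.1 w.2)
      (∑ j : Fin 3, (pderiv (Sum.inr j) Q * pderiv (Sum.inl j) R -
        pderiv (Sum.inl j) Q * pderiv (Sum.inr j) R)) := by
  simp [pbR, fderiv_Ef_x, fderiv_Ef_p, map_sum, map_sub, map_mul]

/-! ### The specific polynomials -/

def κ : ℝ := Real.sqrt 2 / 4

lemma κ_pos : 0 < κ := by
  have : 0 < Real.sqrt 2 := Real.sqrt_pos.2 (by norm_num)
  unfold κ; linarith

def Xx (j : Fin 3) : MvPolynomial (Fin 3 ⊕ Fin 3) ℝ := X (Sum.inl j)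
def Xp (j : Fin 3) : MvPolynomial (Fin 3 ⊕ Fin 3) ℝ := X (Sum.inr j)

def PA : MvPolynomial (Fin 3 ⊕ Fin 3) ℝ :=
  (Xx 0 ^ 2 - Xp 0 ^ 2) * Xp 2 - C 2 * Xx 0 * Xp 0 * Xx 2
def PB : MvPolynomial (Fin 3 ⊕ Fin 3) ℝ :=
  (Xx 1 ^ 2 - Xp 1 ^ 2) * Xp 2 - C 2 * Xx 1 * Xp 1 * Xx 2
def PM : MvPolynomial (Fin 3 ⊕ Fin 3) ℝ :=
  Xx 0 * Xp 1 - Xp 0 * Xx 1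

def Q1 : MvPolynomial (Fin 3 ⊕ Fin 3) ℝ :=
  C (1/2) * (Xx 0 ^ 2 + Xp 0 ^ 2) + C (1/2) * (Xx 1 ^ 2 + Xp 1 ^ 2) + (Xx 2 ^ 2 + Xp 2 ^ 2)
def Q2 : MvPolynomial (Fin 3 ⊕ Fin 3) ℝ := C κ * (PA + C 2 * PB)
def Q3 : MvPolynomial (Fin 3 ⊕ Fin 3) ℝ :=
  C (1/4) * PA ^ 2 + C (1/2) * (Xx 0 ^ 2 + Xp 0 ^ 2) * PM ^ 2

/-! ### Coordinate formulas -/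

lemma C0_eq (w : Phase 3) :
    C0 w = κ * ((w.1 0 ^ 2 - w.2 0 ^ 2) * w.2 2 - 2 * w.1 0 * w.2 0 * w.1 2) := by
  have h : Real.sqrt 2 ^ 2 = 2 := Real.sq_sqrt (by norm_num)
  simp only [C0, κ, zbf, zf, div_pow, div_mul_div_comm, Complex.div_im, Complex.mul_im,
    Complex.mul_re, Complex.sub_re, Complex.sub_im, Complex.add_re, Complex.add_im,
    Complex.ofReal_re, Complex.ofReal_im, Complex.I_re, Complex.I_im, pow_two,
    Complex.normSq_apply]
  field_simp
  ring_nf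
  rw [show Real.sqrt 2 ^ 3 = 2 * Real.sqrt 2 by rw [pow_succ, h]]
  have h7 : Real.sqrt 2 ^ 7 = 8 * Real.sqrt 2 := by
    rw [show Real.sqrt 2 ^ 7 = (Real.sqrt 2 ^ 2) ^ 3 * Real.sqrt 2 by ring, h]; norm_num
  ring_nf
  rw [h7]
  ring

lemma C2_eq (w : Phase 3) :
    C2 w = κ * ((w.1 1 ^ 2 - w.2 1 ^ 2) * w.2 2 - 2 * w.1 1 * w.2 1 * w.1 2) := by
  have h : Real.sqrt 2 ^ 2 = 2 := Real.sq_sqrt (by norm_num)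
  simp only [C2, κ, zbf, zf, div_pow, div_mul_div_comm, Complex.div_im, Complex.mul_im,
    Complex.mul_re, Complex.sub_re, Complex.sub_im, Complex.add_re, Complex.add_im,
    Complex.ofReal_re, Complex.ofReal_im, Complex.I_re, Complex.I_im, pow_two,
    Complex.normSq_apply]
  field_simp
  ring_nf
  rw [show Real.sqrt 2 ^ 3 = 2 * Real.sqrt 2 by rw [pow_succ, h]]
  have h7 : Real.sqrt 2 ^ 7 = 8 * Real.sqrt 2 := by
    rw [show Real.sqrt 2 ^ 7 = (Real.sqrt 2 ^ 2) ^ 3 * Real.sqrt 2 by ring, h]; norm_num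
  ring_nf
  rw [h7]
  ring

lemma M3_eq (w : Phase 3) : M3 w = w.1 0 * w.2 1 - w.2 0 * w.1 1 := by
  simp only [M3, zbf, zf, div_mul_div_comm, Complex.div_im, Complex.mul_im,
    Complex.mul_re, Complex.sub_re, Complex.sub_im, Complex.add_re, Complex.add_im,
    Complex.ofReal_re, Complex.ofReal_im, Complex.I_re, Complex.I_im,
    Complex.normSq_apply]
  field_simp
  ring_nf
  have h : Real.sqrt 2 ^ 2 = 2 := Real.sq_sqrt (by norm_num)
  rw [show Real.sqrt 2 ^ 4 = (Real.sqrt 2 ^ 2) ^ 2 by ring, h]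
  ring

lemma F1_eq : (fun w => IR 0 w + IR 1 w + 2 * IR 2 w) = Ef Q1 := by
  funext w
  simp only [IR, Ef, Q1, Xx, Xp, map_add, map_mul, map_pow, eval_C, eval_X, Sum.elim_inl,
    Sum.elim_inr]
  ring

lemma F2_eq : (fun w => C0 w + 2 * C2 w) = Ef Q2 := by
  funext w
  rw [C0_eq, C2_eq]
  simp only [Ef, Q2, PA, PB, Xx, Xp, map_add, map_mul, map_sub, map_pow, eval_C, eval_X,
    Sum.elim_inl, Sum.elim_inr]
  ring

lemma F3_eq : (fun w => 2 * C0 w ^ 2 + IR 0 w * M3 w ^ 2) = Ef Q3 := by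
  funext w
  rw [C0_eq, M3_eq]
  simp only [IR, Ef, Q3, PA, PM, Xx, Xp, map_add, map_mul, map_sub, map_pow, eval_C, eval_X,
    Sum.elim_inl, Sum.elim_inr, κ]
  have h : Real.sqrt 2 ^ 2 = 2 := Real.sq_sqrt (by norm_num)
  ring_nf
  rw [h]
  ring


/-! ### Bracket polynomials vanish -/

lemma pderiv_two (s : Fin 3 ⊕ Fin 3) : pderiv s (2 : MvPolynomial (Fin 3 ⊕ Fin 3) ℝ) = 0 := by
  rw [show (2 : MvPolynomial (Fin 3 ⊕ Fin 3) ℝ) = C 2 from (map_ofNat C 2).symm, pderiv_C]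

def brk (Q R : MvPolynomial (Fin 3 ⊕ Fin 3) ℝ) : MvPolynomial (Fin 3 ⊕ Fin 3) ℝ :=
  ∑ j : Fin 3, (pderiv (Sum.inr j) Q * pderiv (Sum.inl j) R -
        pderiv (Sum.inl j) Q * pderiv (Sum.inr j) R)

lemma pbR_Ef_brk (Q R : MvPolynomial (Fin 3 ⊕ Fin 3) ℝ) (w : Phase 3) :
    pbR (Ef Q) (Ef R) w = eval (Sum.elim w.1 w.2) (brk Q R) := pbR_Ef Q R w

set_option maxHeartbeats 1000000 in
lemma brk12 (v : Fin 3 ⊕ Fin 3 → ℝ) : eval v (brk Q1 Q2) = 0 := by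
  simp only [brk, Q1, Q2, PA, PB, Xx, Xp, Fin.sum_univ_three, map_add, map_sub, pderiv_mul,
    pderiv_pow, pderiv_C, pderiv_X, Pi.single_apply, map_mul, eval_C, eval_X, map_pow,
    Sum.inl.injEq, Sum.inr.injEq, reduceCtorEq, Fin.isValue, if_true, if_false,
    Fin.reduceEq, ite_true, ite_false, Nat.cast_ofNat, map_one, map_zero, map_ofNat, pderiv_two]
  ring

set_option maxHeartbeats 1000000 in
lemma brk13 (v : Fin 3 ⊕ Fin 3 → ℝ) : eval v (brk Q1 Q3) = 0 := by
  simp only [brk, Q1, Q3, PA, PM, Xx, Xp, Fin.sum_univ_three, map_add, map_sub, pderiv_mul,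
    pderiv_pow, pderiv_C, pderiv_X, Pi.single_apply, map_mul, eval_C, eval_X, map_pow,
    Sum.inl.injEq, Sum.inr.injEq, reduceCtorEq, Fin.isValue, if_true, if_false,
    Fin.reduceEq, ite_true, ite_false, Nat.cast_ofNat, map_one, map_zero, map_ofNat, pderiv_two]
  ring

set_option maxHeartbeats 1000000 in
lemma brk23 (v : Fin 3 ⊕ Fin 3 → ℝ) : eval v (brk Q2 Q3) = 0 := by
  simp only [brk, Q2, Q3, PA, PB, PM, Xx, Xp, Fin.sum_univ_three, map_add, map_sub, pderiv_mul,
    pderiv_pow, pderiv_C, pderiv_X, Pi.single_apply, map_mul, eval_C, eval_X, map_pow,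
    Sum.inl.injEq, Sum.inr.injEq, reduceCtorEq, Fin.isValue, if_true, if_false,
    Fin.reduceEq, ite_true, ite_false, Nat.cast_ofNat, map_one, map_zero, map_ofNat, pderiv_two]
  ring

/-! ### Degrees -/

abbrev V := Fin 3 ⊕ Fin 3
def ee (s : V) (n : ℕ) : V →₀ ℕ := Finsupp.single s n

lemma tdeg_add_le {a b : MvPolynomial V ℝ} {k : ℕ} (ha : a.totalDegree ≤ k)
    (hb : b.totalDegree ≤ k) : (a + b).totalDegree ≤ k :=
  (totalDegree_add a b).trans (max_le ha hb)

lemma deg_mono_le {m : V →₀ ℕ} {c : ℝ} {k : ℕ} (h : (m.sum fun _ n => n) = k) :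
    (monomial m c).totalDegree ≤ k := h ▸ totalDegree_monomial_le m c

def m2T : V →₀ ℕ := ee (Sum.inl 0) 2 + ee (Sum.inr 2) 1

lemma Q2_rep : Q2 =
    monomial m2T κ + monomial (ee (Sum.inr 0) 2 + ee (Sum.inr 2) 1) (-κ)
    + monomial (ee (Sum.inl 0) 1 + ee (Sum.inr 0) 1 + ee (Sum.inl 2) 1) (-(2*κ))
    + monomial (ee (Sum.inl 1) 2 + ee (Sum.inr 2) 1) (2*κ)
    + monomial (ee (Sum.inr 1) 2 + ee (Sum.inr 2) 1) (-(2*κ))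
    + monomial (ee (Sum.inl 1) 1 + ee (Sum.inr 1) 1 + ee (Sum.inl 2) 1) (-(4*κ)) := by
  apply MvPolynomial.funext
  intro v
  simp only [Q2, PA, PB, Xx, Xp, m2T, ee, map_add, map_sub, map_mul, map_pow, eval_C, eval_X,
    eval_monomial, Finsupp.prod_add_index' (h_zero := fun a => pow_zero (v a))
      (h_add := fun a b c => pow_add (v a) b c),
    Finsupp.prod_single_index (h := fun a n => v a ^ n) (pow_zero _), map_ofNat]
  ring

lemma κ_ne : κ ≠ 0 := by
  have : 0 < Real.sqrt 2 := Real.sqrt_pos.2 (by norm_num)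
  unfold κ; positivity

lemma coeff_Q2_top : coeff m2T Q2 = κ := by
  rw [Q2_rep]
  have h1 : ¬(ee (Sum.inr 0) 2 + ee (Sum.inr 2) 1 = m2T) := by
    intro h; have := DFunLike.congr_fun h (Sum.inl 0); simp [ee, m2T, Finsupp.single_apply] at this
  have h2 : ¬(ee (Sum.inl 0) 1 + ee (Sum.inr 0) 1 + ee (Sum.inl 2) 1 = m2T) := by
    intro h; have := DFunLike.congr_fun h (Sum.inl 0); simp [ee, m2T, Finsupp.single_apply] at this
  have h3 : ¬(ee (Sum.inl 1) 2 + ee (Sum.inr 2) 1 = m2T) := by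
    intro h; have := DFunLike.congr_fun h (Sum.inl 0); simp [ee, m2T, Finsupp.single_apply] at this
  have h4 : ¬(ee (Sum.inr 1) 2 + ee (Sum.inr 2) 1 = m2T) := by
    intro h; have := DFunLike.congr_fun h (Sum.inl 0); simp [ee, m2T, Finsupp.single_apply] at this
  have h5 : ¬(ee (Sum.inl 1) 1 + ee (Sum.inr 1) 1 + ee (Sum.inl 2) 1 = m2T) := by
    intro h; have := DFunLike.congr_fun h (Sum.inl 0); simp [ee, m2T, Finsupp.single_apply] at this
  simp only [coeff_add, coeff_monomial, if_pos rfl, if_neg h1, if_neg h2, if_neg h3, if_neg h4,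
    if_neg h5]
  simp

lemma sum_ee2 (s t : V) (a b : ℕ) : ((ee s a + ee t b).sum fun _ n => n) = a + b := by
  rw [Finsupp.sum_add_index' (fun _ => rfl) (fun _ _ _ => rfl)]
  simp [ee, Finsupp.sum_single_index]

lemma sum_ee3 (s t u : V) (a b c : ℕ) :
    ((ee s a + ee t b + ee u c).sum fun _ n => n) = a + b + c := by
  rw [Finsupp.sum_add_index' (fun _ => rfl) (fun _ _ _ => rfl), sum_ee2]
  simp [ee, Finsupp.sum_single_index]

lemma Q2_totalDegree : Q2.totalDegree = 3 := by
  apply le_antisymm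
  · rw [Q2_rep]
    refine tdeg_add_le (tdeg_add_le (tdeg_add_le (tdeg_add_le (tdeg_add_le ?_ ?_) ?_) ?_) ?_) ?_ <;>
      exact deg_mono_le (by simp [m2T, sum_ee2, sum_ee3])
  · have h := le_totalDegree (p := Q2) (s := m2T) (mem_support_iff.2 (by rw [coeff_Q2_top]; exact κ_ne))
    simpa [m2T, sum_ee2] using h

def m3T : V →₀ ℕ := ee (Sum.inl 0) 4 + ee (Sum.inr 2) 2

lemma sum_ee4 (s t u r : V) (a b c d : ℕ) :
    ((ee s a + ee t b + ee u c + ee r d).sum fun _ n => n) = a + b + c + d := by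
  rw [Finsupp.sum_add_index' (fun _ => rfl) (fun _ _ _ => rfl), sum_ee3]
  simp [ee, Finsupp.sum_single_index]

lemma Q3_rep : Q3 =
    monomial m3T (1/4 : ℝ)
    + monomial (ee (Sum.inr 0) 4 + ee (Sum.inr 2) 2) (1/4 : ℝ)
    + monomial (ee (Sum.inl 0) 2 + ee (Sum.inr 0) 2 + ee (Sum.inr 2) 2) (-(1/2) : ℝ)
    + monomial (ee (Sum.inl 0) 3 + ee (Sum.inr 0) 1 + ee (Sum.inl 2) 1 + ee (Sum.inr 2) 1) (-1 : ℝ)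
    + monomial (ee (Sum.inl 0) 1 + ee (Sum.inr 0) 3 + ee (Sum.inl 2) 1 + ee (Sum.inr 2) 1) (1 : ℝ)
    + monomial (ee (Sum.inl 0) 2 + ee (Sum.inr 0) 2 + ee (Sum.inl 2) 2) (1 : ℝ)
    + monomial (ee (Sum.inl 0) 4 + ee (Sum.inr 1) 2) (1/2 : ℝ)
    + monomial (ee (Sum.inl 0) 3 + ee (Sum.inl 1) 1 + ee (Sum.inr 0) 1 + ee (Sum.inr 1) 1) (-1 : ℝ)
    + monomial (ee (Sum.inl 0) 2 + ee (Sum.inl 1) 2 + ee (Sum.inr 0) 2) (1/2 : ℝ)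
    + monomial (ee (Sum.inl 0) 2 + ee (Sum.inr 0) 2 + ee (Sum.inr 1) 2) (1/2 : ℝ)
    + monomial (ee (Sum.inl 0) 1 + ee (Sum.inl 1) 1 + ee (Sum.inr 0) 3 + ee (Sum.inr 1) 1) (-1 : ℝ)
    + monomial (ee (Sum.inl 1) 2 + ee (Sum.inr 0) 4) (1/2 : ℝ)
    := by
  apply MvPolynomial.funext
  intro v
  simp only [Q3, PA, PM, Xx, Xp, m3T, ee, map_add, map_sub, map_mul, map_pow, eval_C, eval_X,
    eval_monomial, Finsupp.prod_add_index' (h_zero := fun a => pow_zero (v a))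
      (h_add := fun a b c => pow_add (v a) b c),
    Finsupp.prod_single_index (h := fun a n => v a ^ n) (pow_zero _), map_ofNat]
  ring

lemma coeff_Q3_top : coeff m3T Q3 = 1/4 := by
  rw [Q3_rep]
  have h1 : ¬(ee (Sum.inr 0) 4 + ee (Sum.inr 2) 2 = m3T) := by
    intro h
    have ha := DFunLike.congr_fun h (Sum.inl 0); have hb := DFunLike.congr_fun h (Sum.inr 2)
    simp [ee, m3T, Finsupp.single_apply] at ha hb
  have h2 : ¬(ee (Sum.inl 0) 2 + ee (Sum.inr 0) 2 + ee (Sum.inr 2) 2 = m3T) := by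
    intro h
    have ha := DFunLike.congr_fun h (Sum.inl 0); have hb := DFunLike.congr_fun h (Sum.inr 2)
    simp [ee, m3T, Finsupp.single_apply] at ha hb
  have h3 : ¬(ee (Sum.inl 0) 3 + ee (Sum.inr 0) 1 + ee (Sum.inl 2) 1 + ee (Sum.inr 2) 1 = m3T) := by
    intro h
    have ha := DFunLike.congr_fun h (Sum.inl 0); have hb := DFunLike.congr_fun h (Sum.inr 2)
    simp [ee, m3T, Finsupp.single_apply] at ha hb
  have h4 : ¬(ee (Sum.inl 0) 1 + ee (Sum.inr 0) 3 + ee (Sum.inl 2) 1 + ee (Sum.inr 2) 1 = m3T) := by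
    intro h
    have ha := DFunLike.congr_fun h (Sum.inl 0); have hb := DFunLike.congr_fun h (Sum.inr 2)
    simp [ee, m3T, Finsupp.single_apply] at ha hb
  have h5 : ¬(ee (Sum.inl 0) 2 + ee (Sum.inr 0) 2 + ee (Sum.inl 2) 2 = m3T) := by
    intro h
    have ha := DFunLike.congr_fun h (Sum.inl 0); have hb := DFunLike.congr_fun h (Sum.inr 2)
    simp [ee, m3T, Finsupp.single_apply] at ha hb
  have h6 : ¬(ee (Sum.inl 0) 4 + ee (Sum.inr 1) 2 = m3T) := by
    intro h
    have ha := DFunLike.congr_fun h (Sum.inl 0); have hb := DFunLike.congr_fun h (Sum.inr 2)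
    simp [ee, m3T, Finsupp.single_apply] at ha hb
  have h7 : ¬(ee (Sum.inl 0) 3 + ee (Sum.inl 1) 1 + ee (Sum.inr 0) 1 + ee (Sum.inr 1) 1 = m3T) := by
    intro h
    have ha := DFunLike.congr_fun h (Sum.inl 0); have hb := DFunLike.congr_fun h (Sum.inr 2)
    simp [ee, m3T, Finsupp.single_apply] at ha hb
  have h8 : ¬(ee (Sum.inl 0) 2 + ee (Sum.inl 1) 2 + ee (Sum.inr 0) 2 = m3T) := by
    intro h
    have ha := DFunLike.congr_fun h (Sum.inl 0); have hb := DFunLike.congr_fun h (Sum.inr 2)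
    simp [ee, m3T, Finsupp.single_apply] at ha hb
  have h9 : ¬(ee (Sum.inl 0) 2 + ee (Sum.inr 0) 2 + ee (Sum.inr 1) 2 = m3T) := by
    intro h
    have ha := DFunLike.congr_fun h (Sum.inl 0); have hb := DFunLike.congr_fun h (Sum.inr 2)
    simp [ee, m3T, Finsupp.single_apply] at ha hb
  have h10 : ¬(ee (Sum.inl 0) 1 + ee (Sum.inl 1) 1 + ee (Sum.inr 0) 3 + ee (Sum.inr 1) 1 = m3T) := by
    intro h
    have ha := DFunLike.congr_fun h (Sum.inl 0); have hb := DFunLike.congr_fun h (Sum.inr 2)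
    simp [ee, m3T, Finsupp.single_apply] at ha hb
  have h11 : ¬(ee (Sum.inl 1) 2 + ee (Sum.inr 0) 4 = m3T) := by
    intro h
    have ha := DFunLike.congr_fun h (Sum.inl 0); have hb := DFunLike.congr_fun h (Sum.inr 2)
    simp [ee, m3T, Finsupp.single_apply] at ha hb
  simp only [coeff_add, coeff_monomial, if_pos rfl, if_neg h1, if_neg h2, if_neg h3, if_neg h4, if_neg h5, if_neg h6, if_neg h7, if_neg h8, if_neg h9, if_neg h10, if_neg h11]
  simp

lemma Q3_totalDegree : Q3.totalDegree = 6 := by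
  apply le_antisymm
  · rw [Q3_rep]
    refine tdeg_add_le (tdeg_add_le (tdeg_add_le (tdeg_add_le (tdeg_add_le (tdeg_add_le (tdeg_add_le (tdeg_add_le (tdeg_add_le (tdeg_add_le (tdeg_add_le ?_ ?_) ?_) ?_) ?_) ?_) ?_) ?_) ?_) ?_) ?_) ?_ <;>
      exact deg_mono_le (by simp [m3T, sum_ee2, sum_ee3, sum_ee4])
  · have h := le_totalDegree (p := Q3) (s := m3T)
      (mem_support_iff.2 (by rw [coeff_Q3_top]; norm_num))
    simpa [m3T, sum_ee2] using h

/-! ### Functional independence -/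

def sel : Fin 3 → (Fin 3 ⊕ Fin 3) := ![Sum.inl 0, Sum.inr 1, Sum.inr 2]
def dirs : Fin 3 → Phase 3 := ![(Pi.single 0 1, 0), (0, Pi.single 1 1), (0, Pi.single 2 1)]
def Qv : Fin 3 → MvPolynomial (Fin 3 ⊕ Fin 3) ℝ := ![Q1, Q2, Q3]
def Qg : MvPolynomial (Fin 3 ⊕ Fin 3) ℝ :=
  Matrix.det (Matrix.of fun i k => pderiv (sel k) (Qv i))

lemma fderiv_dir (i k : Fin 3) (w : Phase 3) :
    fderiv ℝ (Ef (Qv i)) w (dirs k) = eval (Sum.elim w.1 w.2) (pderiv (sel k) (Qv i)) := by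
  fin_cases k <;> simp [dirs, sel, fderiv_Ef_x, fderiv_Ef_p]

lemma det_eq (w : Phase 3) :
    (Matrix.of fun i k => fderiv ℝ (Ef (Qv i)) w (dirs k)).det = Ef Qg w := by
  rw [Ef, Qg, RingHom.map_det]
  congr 1
  ext i k
  simp [Matrix.map_apply, fderiv_dir]

def w0 : Phase 3 := (![1,0,0], ![0,1,1])

set_option maxHeartbeats 1000000 in
lemma Qg_w0 : Ef Qg w0 ≠ 0 := by
  have : Ef Qg w0 = 23 * κ := by
    rw [Ef, Qg, RingHom.map_det]
    rw [Matrix.det_fin_three]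
    simp only [Matrix.map_apply, Matrix.of_apply, Qv, sel, w0, Q1, Q2, Q3, PA, PB, PM, Xx, Xp,
      Matrix.cons_val_zero, Matrix.cons_val_one, Matrix.head_cons, Matrix.cons_val_two,
      Matrix.tail_cons, map_add, map_sub, map_mul, map_pow, pderiv_mul, pderiv_pow, pderiv_C,
      pderiv_X_self, pderiv_X_of_ne, pderiv_two, Sum.inl.injEq, Sum.inr.injEq, reduceCtorEq,
      Fin.isValue, Fin.reduceEq, ite_true, ite_false, if_true, if_false, eval_C, eval_X,
      Nat.cast_ofNat, map_one, map_zero, map_ofNat, Sum.elim_inl, Sum.elim_inr, ne_eq,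
      not_false_eq_true, Matrix.cons_val_fin_one, Matrix.cons_val']
    norm_num (config := { decide := true }) [Pi.single_apply, Matrix.cons_val_zero, Matrix.cons_val_one, Matrix.head_cons,
      Matrix.cons_val_two, Matrix.tail_cons, pderiv_two]
    all_goals ring_nf
  rw [this]
  have := κ_pos
  positivity

lemma indep {w : Phase 3} (hw : Ef Qg w ≠ 0) :
    LinearIndependent ℝ (fun i => fderiv ℝ (Ef (Qv i)) w) := by
  rw [Fintype.linearIndependent_iff]
  intro c hc
  set M : Matrix (Fin 3) (Fin 3) ℝ := Matrix.of fun i k => fderiv ℝ (Ef (Qv i)) w (dirs k) with hM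
  have hdet : M.det ≠ 0 := by rw [hM, det_eq]; exact hw
  have hvm : Matrix.vecMul c M = 0 := by
    funext k
    have h := congrArg (fun L : Phase 3 →L[ℝ] ℝ => L (dirs k)) hc
    simpa [Matrix.vecMul, dotProduct, M, ContinuousLinearMap.sum_apply] using h
  have h0 := Matrix.eq_zero_of_vecMul_eq_zero hdet hvm
  exact fun i => congrFun h0 i

lemma EfQg_analytic : AnalyticOnNhd ℝ (Ef Qg) Set.univ := by
  have h : Ef Qg = fun x => eval (vmapL x) Qg := by
    funext x; rw [Ef, vmapL_apply]
  rw [h]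
  exact AnalyticOnNhd.eval_continuousLinearMap vmapL Qg

lemma EfQg_cont : Continuous (Ef Qg) :=
  continuous_iff_continuousAt.2 fun w => (hasFDerivAt_Ef Qg w).differentiableAt.continuousAt

lemma dense_ne : Dense {w : Phase 3 | Ef Qg w ≠ 0} := by
  rw [dense_iff_inter_open]
  rintro V hV ⟨z, hz⟩
  by_contra h
  rw [Set.not_nonempty_iff_eq_empty] at h
  have hzero : ∀ x ∈ V, Ef Qg x = 0 := by
    intro x hx
    by_contra hne
    exact Set.eq_empty_iff_forall_notMem.1 h x ⟨hx, hne⟩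
  have hev : Ef Qg =ᶠ[nhds z] 0 :=
    Filter.eventuallyEq_of_mem (hV.mem_nhds hz) (fun x hx => hzero x hx)
  have := EfQg_analytic.eqOn_zero_of_preconnected_of_eventuallyEq_zero
    isPreconnected_univ (Set.mem_univ z) hev
  exact Qg_w0 (this (Set.mem_univ w0))

lemma funIndep : FunctionallyIndependent ![Ef Q1, Ef Q2, Ef Q3] := by
  refine ⟨{w : Phase 3 | Ef Qg w ≠ 0}, ?_, dense_ne, ?_⟩
  · have : {w : Phase 3 | Ef Qg w ≠ 0} = (Ef Qg) ⁻¹' ({0}ᶜ) := rfl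
    rw [this]
    exact isOpen_compl_singleton.preimage EfQg_cont
  · intro w hw
    have h : (fun i => fderiv ℝ ((![Ef Q1, Ef Q2, Ef Q3]) i) w)
        = fun i => fderiv ℝ (Ef (Qv i)) w := by
      funext i
      fin_cases i <;> rfl
    rw [h]
    exact indep hw

end St18

/-- section 4.2: `F₁ = I₁ + I₂ + 2I₃`, `F₂ = C₀ + 2C₂`,
`F₃ = 2C₀² + I₁M₃²` pairwise Poisson-commute and are functionally independent, so they
form a (non-simple) integrable set with `deg F₂ = 3`, `deg F₃ = 6` for `l = (1,1,2)`. -/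
theorem statement18 (F1 F2 F3 : Phase 3 → ℝ)
    (hF1 : F1 = fun w => IR 0 w + IR 1 w + 2 * IR 2 w)
    (hF2 : F2 = fun w => C0 w + 2 * C2 w)
    (hF3 : F3 = fun w => 2 * C0 w ^ 2 + IR 0 w * M3 w ^ 2) :
    pbR F1 F2 = 0 ∧ pbR F1 F3 = 0 ∧ pbR F2 F3 = 0 ∧
    FunctionallyIndependent ![F1, F2, F3] ∧
    (∃ Q : MvPolynomial (Fin 3 ⊕ Fin 3) ℝ, Q.totalDegree = 3 ∧
      F2 = fun w => MvPolynomial.eval (Sum.elim w.1 w.2) Q) ∧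
    (∃ Q : MvPolynomial (Fin 3 ⊕ Fin 3) ℝ, Q.totalDegree = 6 ∧
      F3 = fun w => MvPolynomial.eval (Sum.elim w.1 w.2) Q) := by
  rw [hF1, hF2, hF3, St18.F1_eq, St18.F2_eq, St18.F3_eq]
  refine ⟨?_, ?_, ?_, St18.funIndep, ⟨St18.Q2, St18.Q2_totalDegree, rfl⟩,
    ⟨St18.Q3, St18.Q3_totalDegree, rfl⟩⟩
  · funext w; rw [St18.pbR_Ef_brk, St18.brk12]; rfl
  · funext w; rw [St18.pbR_Ef_brk, St18.brk13]; rfl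
  · funext w; rw [St18.pbR_Ef_brk, St18.brk23]; rfl

end
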